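/- Let (U_j)_{j≥1} and (V_k)_{k≥1} be two independent sequences, each consisting of i.i.d. random elements, and let G be a bounded measurable real-valued function with E[G(U_1, V_1)] = 0. Then S_N = N^{-2} Σ_{j=1}^N Σ_{k=1}^N G(U_j, V_k) converges to 0 almost surely as N → ∞. -/

import Mathlib

open MeasureTheory ProbabilityTheory Filter

private lemma integrable_of_abs_le' {δ : Type*} [MeasurableSpace δ] {Q : Measure δ}
    [IsFiniteMeasure Q] {f : δ → ℝ} (hf : AEStronglyMeasurable f Q) {D : ℝ}
    (hD : ∀ x, |f x| ≤ D) : Integrable f Q :=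
  Integrable.mono' (integrable_const D) hf
    (ae_of_all _ fun x => by simpa [Real.norm_eq_abs] using hD x)

private lemma ae_tendsto_zero_of_summable_sq' {Ω : Type*} [MeasurableSpace Ω] (P : Measure Ω)
    (f : ℕ → Ω → ℝ) (hmeas : ∀ n, Measurable (f n))
    (hsum : ∑' n, ∫⁻ ω, (‖f n ω‖₊ : ENNReal) ^ 2 ∂P ≠ ⊤) :
    ∀ᵐ ω ∂P, Tendsto (fun n => f n ω) atTop (nhds 0) := by
  have hmeas' : ∀ n, Measurable fun ω => (‖f n ω‖₊ : ENNReal) ^ 2 :=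
    fun n => ((hmeas n).nnnorm.coe_nnreal_ennreal).pow_const 2
  have h1 : ∫⁻ ω, ∑' n, (‖f n ω‖₊ : ENNReal) ^ 2 ∂P ≠ ⊤ := by
    rw [lintegral_tsum fun n => (hmeas' n).aemeasurable]; exact hsum
  have h2 : ∀ᵐ ω ∂P, ∑' n, (‖f n ω‖₊ : ENNReal) ^ 2 < ⊤ :=
    ae_lt_top (Measurable.ennreal_tsum hmeas') h1
  filter_upwards [h2] with ω hω
  have h3 : Tendsto (fun n => (‖f n ω‖₊ : ENNReal) ^ 2) atTop (nhds 0) :=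
    ENNReal.tendsto_atTop_zero_of_tsum_ne_top hω.ne
  have h4 : Tendsto (fun n => ‖f n ω‖ ^ 2) atTop (nhds 0) := by
    have h := (ENNReal.tendsto_toReal (show (0:ENNReal) ≠ ⊤ by simp)).comp h3
    simp only [ENNReal.toReal_zero] at h
    refine Tendsto.congr (fun n => ?_) h
    simp [Function.comp, ENNReal.toReal_pow]
  rw [tendsto_zero_iff_norm_tendsto_zero]
  have h5 : Tendsto (fun n => Real.sqrt (‖f n ω‖ ^ 2)) atTop (nhds 0) := by
    simpa [Function.comp_def] using (Real.continuous_sqrt.tendsto 0).comp h4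
  refine h5.congr fun n => Real.sqrt_sq (norm_nonneg _)

theorem two_index_strong_law
    {Ω α β : Type*} [MeasurableSpace Ω] [MeasurableSpace α] [MeasurableSpace β]
    (P : Measure Ω) [IsProbabilityMeasure P]
    (U : ℕ → Ω → α) (V : ℕ → Ω → β)
    (hUmeas : ∀ j, Measurable (U j)) (hVmeas : ∀ k, Measurable (V k))
    (hUindep : iIndepFun U P)
    (hVindep : iIndepFun V P)
    (hUid : ∀ j, Measure.map (U j) P = Measure.map (U 0) P)
    (hVid : ∀ k, Measure.map (V k) P = Measure.map (V 0) P)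
    (hUV : IndepFun (fun ω j => U j ω) (fun ω k => V k ω) P)
    (G : α × β → ℝ) (hGmeas : Measurable G) (C : ℝ) (hGbdd : ∀ x, |G x| ≤ C)
    (hGcentered : ∫ ω, G (U 0 ω, V 0 ω) ∂P = 0) :
    ∀ᵐ ω ∂P, Tendsto
      (fun N : ℕ => ((N : ℝ) ^ 2)⁻¹ *
        ∑ j ∈ Finset.range N, ∑ k ∈ Finset.range N, G (U j ω, V k ω))
      atTop (nhds 0) := by
  classical
  have hΩ : Nonempty Ω := by
    by_contra hne
    rw [not_nonempty_iff] at hne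
    have : P Set.univ = 0 := by simp [Set.univ_eq_empty_iff.2 hne]
    simp [measure_univ] at this
  obtain ⟨ω₀⟩ := hΩ
  have hC : 0 ≤ C := le_trans (abs_nonneg _) (hGbdd (U 0 ω₀, V 0 ω₀))
  set μ : Measure α := P.map (U 0) with hμdef
  set ν : Measure β := P.map (V 0) with hνdef
  have hμp : IsProbabilityMeasure μ := Measure.isProbabilityMeasure_map (hUmeas 0).aemeasurable
  have hνp : IsProbabilityMeasure ν := Measure.isProbabilityMeasure_map (hVmeas 0).aemeasurable
  have hGsm : StronglyMeasurable G := hGmeas.stronglyMeasurable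
  -- marginal integrals
  set g1 : α → ℝ := fun u => ∫ v, G (u, v) ∂ν with hg1def
  set g2 : β → ℝ := fun v => ∫ u, G (u, v) ∂μ with hg2def
  have hg1sm : StronglyMeasurable g1 := hGsm.integral_prod_right'
  have hg2sm : StronglyMeasurable g2 := hGsm.integral_prod_left'
  have hg1b : ∀ u, |g1 u| ≤ C := by
    intro u
    rw [← Real.norm_eq_abs]
    calc ‖∫ v, G (u, v) ∂ν‖ ≤ C * (ν Set.univ).toReal :=
          norm_integral_le_of_norm_le_const (ae_of_all _ fun v => by
            rw [Real.norm_eq_abs]; exact hGbdd _)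
      _ = C := by simp
  have hg2b : ∀ v, |g2 v| ≤ C := by
    intro v
    rw [← Real.norm_eq_abs]
    calc ‖∫ u, G (u, v) ∂μ‖ ≤ C * (μ Set.univ).toReal :=
          norm_integral_le_of_norm_le_const (ae_of_all _ fun u => by
            rw [Real.norm_eq_abs]; exact hGbdd _)
      _ = C := by simp
  set h : α × β → ℝ := fun x => G x - g1 x.1 - g2 x.2 with hhdef
  have hhsm : StronglyMeasurable h :=
    (hGsm.sub (hg1sm.comp_measurable measurable_fst)).sub
      (hg2sm.comp_measurable measurable_snd)
  have hhm : Measurable h := hhsm.measurable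
  have hhb : ∀ x, |h x| ≤ 3 * C := by
    intro x
    have h1 := abs_le.mp (hGbdd x)
    have h2 := abs_le.mp (hg1b x.1)
    have h3 := abs_le.mp (hg2b x.2)
    rw [abs_le]
    constructor <;> · simp only [hhdef]; obtain ⟨a1,a2⟩ := h1; obtain ⟨b1,b2⟩ := h2
                      obtain ⟨c1,c2⟩ := h3; linarith
  -- joint laws
  have hUVjk : ∀ j k, IndepFun (U j) (V k) P := fun j k =>
    hUV.comp (measurable_pi_apply j) (measurable_pi_apply k)
  have hlawUV : ∀ j k, P.map (fun ω => (U j ω, V k ω)) = μ.prod ν := by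
    intro j k
    rw [(indepFun_iff_map_prod_eq_prod_map_map (hUmeas j).aemeasurable
      (hVmeas k).aemeasurable).mp (hUVjk j k), hUid j, hVid k]
  have hGint : Integrable G (μ.prod ν) := integrable_of_abs_le' hGsm.aestronglyMeasurable hGbdd
  have hm : ∫ x, G x ∂(μ.prod ν) = 0 := by
    rw [← hlawUV 0 0,
      integral_map ((hUmeas 0).prodMk (hVmeas 0)).aemeasurable hGsm.aestronglyMeasurable]
    exact hGcentered
  have hg1int : ∫ u, g1 u ∂μ = 0 := by
    rw [hg1def, ← MeasureTheory.integral_prod _ hGint]; exact hm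
  have hg2int : ∫ v, g2 v ∂ν = 0 := by
    rw [hg2def, ← MeasureTheory.integral_prod_symm _ hGint]; exact hm
  have hGslice1 : ∀ u, Integrable (fun v => G (u, v)) ν := fun u =>
    integrable_of_abs_le' (hGsm.comp_measurable measurable_prodMk_left).aestronglyMeasurable
      (fun v => hGbdd _)
  have hGslice2 : ∀ v, Integrable (fun u => G (u, v)) μ := fun v =>
    integrable_of_abs_le' (hGsm.comp_measurable measurable_prodMk_right).aestronglyMeasurable
      (fun u => hGbdd _)
  have hg1intg : Integrable g1 μ := integrable_of_abs_le' hg1sm.aestronglyMeasurable hg1b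
  have hg2intg : Integrable g2 ν := integrable_of_abs_le' hg2sm.aestronglyMeasurable hg2b
  -- degeneracy
  have hdeg1 : ∀ v, ∫ u, h (u, v) ∂μ = 0 := by
    intro v
    simp only [hhdef]
    have hint1 : Integrable (fun u => G (u, v) - g1 u) μ := (hGslice2 v).sub hg1intg
    rw [integral_sub hint1 (integrable_const _),
      integral_sub (hGslice2 v) hg1intg, integral_const, hg1int]
    simp [hg2def]
  have hdeg2 : ∀ u, ∫ v, h (u, v) ∂ν = 0 := by
    intro u
    simp only [hhdef]
    have hint1 : Integrable (fun v => G (u, v) - g1 u) ν := (hGslice1 u).sub (integrable_const _)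
    rw [integral_sub hint1 hg2intg, integral_sub (hGslice1 u) (integrable_const _),
      integral_const, hg2int]
    simp [hg1def]
  -- SLLN for the two marginal parts
  have hA : ∀ᵐ ω ∂P, Tendsto (fun n : ℕ => (n : ℝ)⁻¹ • ∑ j ∈ Finset.range n, g1 (U j ω))
      atTop (nhds 0) := by
    have hint : Integrable (fun ω => g1 (U 0 ω)) P :=
      integrable_of_abs_le' (hg1sm.comp_measurable (hUmeas 0)).aestronglyMeasurable
        (fun ω => hg1b _)
    have hindep : Pairwise (Function.onFun (IndepFun · · P) fun j ω => g1 (U j ω)) := fun i j hij =>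
      (hUindep.indepFun hij).comp hg1sm.measurable hg1sm.measurable
    have hmap : ∀ i : ℕ, P.map (fun ω => g1 (U i ω)) = μ.map g1 := by
      intro i
      rw [show (fun ω => g1 (U i ω)) = g1 ∘ U i from rfl,
        ← Measure.map_map hg1sm.measurable (hUmeas i), hUid i]
    have hident : ∀ j, IdentDistrib (fun ω => g1 (U j ω)) (fun ω => g1 (U 0 ω)) P P := fun j =>
      ⟨(hg1sm.comp_measurable (hUmeas j)).aemeasurable,
        (hg1sm.comp_measurable (hUmeas 0)).aemeasurable, by rw [hmap j, hmap 0]⟩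
    have hmean : ∫ ω, g1 (U 0 ω) ∂P = 0 := by
      have e := integral_map (μ := P) (φ := U 0) (hUmeas 0).aemeasurable
        (hg1sm.aestronglyMeasurable (μ := μ))
      rw [← e]; exact hg1int
    have hs := strong_law_ae (μ := P) (fun j ω => g1 (U j ω)) hint hindep hident
    have hlim : nhds (0 : ℝ) = nhds (∫ ω, g1 (U 0 ω) ∂P) := by rw [hmean]
    rw [hlim]
    exact hs
  have hB : ∀ᵐ ω ∂P, Tendsto (fun n : ℕ => (n : ℝ)⁻¹ • ∑ k ∈ Finset.range n, g2 (V k ω))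
      atTop (nhds 0) := by
    have hint : Integrable (fun ω => g2 (V 0 ω)) P :=
      integrable_of_abs_le' (hg2sm.comp_measurable (hVmeas 0)).aestronglyMeasurable
        (fun ω => hg2b _)
    have hindep : Pairwise (Function.onFun (IndepFun · · P) fun k ω => g2 (V k ω)) := fun i j hij =>
      (hVindep.indepFun hij).comp hg2sm.measurable hg2sm.measurable
    have hmap : ∀ i : ℕ, P.map (fun ω => g2 (V i ω)) = ν.map g2 := by
      intro i
      rw [show (fun ω => g2 (V i ω)) = g2 ∘ V i from rfl,
        ← Measure.map_map hg2sm.measurable (hVmeas i), hVid i]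
    have hident : ∀ k, IdentDistrib (fun ω => g2 (V k ω)) (fun ω => g2 (V 0 ω)) P P := fun k =>
      ⟨(hg2sm.comp_measurable (hVmeas k)).aemeasurable,
        (hg2sm.comp_measurable (hVmeas 0)).aemeasurable, by rw [hmap k, hmap 0]⟩
    have hmean : ∫ ω, g2 (V 0 ω) ∂P = 0 := by
      have e := integral_map (μ := P) (φ := V 0) (hVmeas 0).aemeasurable
        (hg2sm.aestronglyMeasurable (μ := ν))
      rw [← e]; exact hg2int
    have hs := strong_law_ae (μ := P) (fun k ω => g2 (V k ω)) hint hindep hident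
    have hlim : nhds (0 : ℝ) = nhds (∫ ω, g2 (V 0 ω) ∂P) := by rw [hmean]
    rw [hlim]
    exact hs
  -- orthogonality for the degenerate kernel
  set a : ℕ × ℕ → Ω → ℝ := fun p ω => h (U p.1 ω, V p.2 ω) with hadef
  have hameas : ∀ p : ℕ × ℕ, Measurable (a p) := fun p =>
    hhm.comp ((hUmeas p.1).prodMk (hVmeas p.2))
  have hab : ∀ p ω, |a p ω| ≤ 3 * C := fun p ω => hhb _
  have hintpq : ∀ p q : ℕ × ℕ, Integrable (fun ω => a p ω * a q ω) P := fun p q =>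
    integrable_of_abs_le' ((hameas p).mul (hameas q)).aestronglyMeasurable
      (D := 3 * C * (3 * C)) (fun ω => by
        rw [abs_mul]
        exact mul_le_mul (hab p ω) (hab q ω) (abs_nonneg _) (by linarith))
  have hortho : ∀ p q : ℕ × ℕ, p ≠ q → ∫ ω, a p ω * a q ω ∂P = 0 := by
    rintro ⟨j1, k1⟩ ⟨j2, k2⟩ hpq
    rcases eq_or_ne j1 j2 with hj | hj
    · subst hj
      have hk : k1 ≠ k2 := fun hk => hpq (by rw [hk])
      have hVpair : P.map (fun ω => (V k1 ω, V k2 ω)) = ν.prod ν := by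
        have e := (indepFun_iff_map_prod_eq_prod_map_map
          (hVmeas k1).aemeasurable (hVmeas k2).aemeasurable).mp (hVindep.indepFun hk)
        rw [hVid k1, hVid k2] at e
        exact e
      have hmeas2 : Measurable fun ω => (V k1 ω, V k2 ω) := (hVmeas k1).prodMk (hVmeas k2)
      have hIndep : IndepFun (U j1) (fun ω => (V k1 ω, V k2 ω)) P :=
        hUV.comp (measurable_pi_apply j1)
          ((measurable_pi_apply k1).prodMk (measurable_pi_apply k2))
      have hlaw : P.map (fun ω => (U j1 ω, (V k1 ω, V k2 ω))) = μ.prod (ν.prod ν) := by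
        have e := (indepFun_iff_map_prod_eq_prod_map_map
          (hUmeas j1).aemeasurable hmeas2.aemeasurable).mp hIndep
        rw [hUid j1, hVpair] at e
        exact e
      have hFm : Measurable fun x : α × β × β => h (x.1, x.2.1) * h (x.1, x.2.2) :=
        (hhm.comp (measurable_fst.prodMk (measurable_fst.comp measurable_snd))).mul
          (hhm.comp (measurable_fst.prodMk (measurable_snd.comp measurable_snd)))
      have hFint : Integrable (fun x : α × β × β => h (x.1, x.2.1) * h (x.1, x.2.2))
          (μ.prod (ν.prod ν)) :=
        integrable_of_abs_le' hFm.aestronglyMeasurable (D := 3 * C * (3 * C)) (fun x => by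
          rw [abs_mul]
          exact mul_le_mul (hhb _) (hhb _) (abs_nonneg _) (by linarith))
      have key : ∫ ω, a (j1, k1) ω * a (j1, k2) ω ∂P
          = ∫ x : α × β × β, h (x.1, x.2.1) * h (x.1, x.2.2) ∂(μ.prod (ν.prod ν)) := by
        rw [← hlaw]
        exact (integral_map ((hUmeas j1).prodMk hmeas2).aemeasurable
          hFm.stronglyMeasurable.aestronglyMeasurable).symm
      rw [key, MeasureTheory.integral_prod _ hFint]
      have inner : ∀ u : α, (∫ vp : β × β, h (u, vp.1) * h (u, vp.2) ∂(ν.prod ν)) = 0 := by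
        intro u
        calc ∫ vp : β × β, h (u, vp.1) * h (u, vp.2) ∂(ν.prod ν)
            = (∫ v, h (u, v) ∂ν) * ∫ v, h (u, v) ∂ν :=
              integral_prod_mul (f := fun v => h (u, v)) (g := fun v => h (u, v))
          _ = 0 := by rw [hdeg2 u, mul_zero]
      simp only [inner, integral_zero]
    · rcases eq_or_ne k1 k2 with hk | hk
      · subst hk
        have hUpair : P.map (fun ω => (U j1 ω, U j2 ω)) = μ.prod μ := by
          have e := (indepFun_iff_map_prod_eq_prod_map_map
            (hUmeas j1).aemeasurable (hUmeas j2).aemeasurable).mp (hUindep.indepFun hj)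
          rw [hUid j1, hUid j2] at e
          exact e
        have hmeas2 : Measurable fun ω => (U j1 ω, U j2 ω) := (hUmeas j1).prodMk (hUmeas j2)
        have hIndep : IndepFun (fun ω => (U j1 ω, U j2 ω)) (V k1) P :=
          hUV.comp ((measurable_pi_apply j1).prodMk (measurable_pi_apply j2))
            (measurable_pi_apply k1)
        have hlaw : P.map (fun ω => ((U j1 ω, U j2 ω), V k1 ω)) = (μ.prod μ).prod ν := by
          have e := (indepFun_iff_map_prod_eq_prod_map_map
            hmeas2.aemeasurable (hVmeas k1).aemeasurable).mp hIndep
          rw [hUpair, hVid k1] at e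
          exact e
        have hFm : Measurable fun x : (α × α) × β => h (x.1.1, x.2) * h (x.1.2, x.2) :=
          (hhm.comp ((measurable_fst.comp measurable_fst).prodMk measurable_snd)).mul
            (hhm.comp ((measurable_snd.comp measurable_fst).prodMk measurable_snd))
        have hFint : Integrable (fun x : (α × α) × β => h (x.1.1, x.2) * h (x.1.2, x.2))
            ((μ.prod μ).prod ν) :=
          integrable_of_abs_le' hFm.aestronglyMeasurable (D := 3 * C * (3 * C)) (fun x => by
            rw [abs_mul]
            exact mul_le_mul (hhb _) (hhb _) (abs_nonneg _) (by linarith))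
        have key : ∫ ω, a (j1, k1) ω * a (j2, k1) ω ∂P
            = ∫ x : (α × α) × β, h (x.1.1, x.2) * h (x.1.2, x.2) ∂((μ.prod μ).prod ν) := by
          rw [← hlaw]
          exact (integral_map (hmeas2.prodMk (hVmeas k1)).aemeasurable
            hFm.stronglyMeasurable.aestronglyMeasurable).symm
        rw [key, MeasureTheory.integral_prod_symm _ hFint]
        have inner : ∀ v : β, (∫ up : α × α, h (up.1, v) * h (up.2, v) ∂(μ.prod μ)) = 0 := by
          intro v
          calc ∫ up : α × α, h (up.1, v) * h (up.2, v) ∂(μ.prod μ)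
              = (∫ u, h (u, v) ∂μ) * ∫ u, h (u, v) ∂μ :=
                integral_prod_mul (f := fun u => h (u, v)) (g := fun u => h (u, v))
            _ = 0 := by rw [hdeg1 v, mul_zero]
        simp only [inner, integral_zero]
      · -- all four indices distinct in each family
        have hUpair : P.map (fun ω => (U j1 ω, U j2 ω)) = μ.prod μ := by
          have e := (indepFun_iff_map_prod_eq_prod_map_map
            (hUmeas j1).aemeasurable (hUmeas j2).aemeasurable).mp (hUindep.indepFun hj)
          rw [hUid j1, hUid j2] at e
          exact e
        have hVpair : P.map (fun ω => (V k1 ω, V k2 ω)) = ν.prod ν := by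
          have e := (indepFun_iff_map_prod_eq_prod_map_map
            (hVmeas k1).aemeasurable (hVmeas k2).aemeasurable).mp (hVindep.indepFun hk)
          rw [hVid k1, hVid k2] at e
          exact e
        have hmeasU : Measurable fun ω => (U j1 ω, U j2 ω) := (hUmeas j1).prodMk (hUmeas j2)
        have hmeasV : Measurable fun ω => (V k1 ω, V k2 ω) := (hVmeas k1).prodMk (hVmeas k2)
        have hIndep : IndepFun (fun ω => (U j1 ω, U j2 ω)) (fun ω => (V k1 ω, V k2 ω)) P :=
          hUV.comp ((measurable_pi_apply j1).prodMk (measurable_pi_apply j2))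
            ((measurable_pi_apply k1).prodMk (measurable_pi_apply k2))
        have hlaw : P.map (fun ω => ((U j1 ω, U j2 ω), (V k1 ω, V k2 ω)))
            = (μ.prod μ).prod (ν.prod ν) := by
          have e := (indepFun_iff_map_prod_eq_prod_map_map
            hmeasU.aemeasurable hmeasV.aemeasurable).mp hIndep
          rw [hUpair, hVpair] at e
          exact e
        have hFm : Measurable fun x : (α × α) × β × β => h (x.1.1, x.2.1) * h (x.1.2, x.2.2) :=
          (hhm.comp ((measurable_fst.comp measurable_fst).prodMk
              (measurable_fst.comp measurable_snd))).mul
            (hhm.comp ((measurable_snd.comp measurable_fst).prodMk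
              (measurable_snd.comp measurable_snd)))
        have hFint : Integrable (fun x : (α × α) × β × β => h (x.1.1, x.2.1) * h (x.1.2, x.2.2))
            ((μ.prod μ).prod (ν.prod ν)) :=
          integrable_of_abs_le' hFm.aestronglyMeasurable (D := 3 * C * (3 * C)) (fun x => by
            rw [abs_mul]
            exact mul_le_mul (hhb _) (hhb _) (abs_nonneg _) (by linarith))
        have key : ∫ ω, a (j1, k1) ω * a (j2, k2) ω ∂P
            = ∫ x : (α × α) × β × β, h (x.1.1, x.2.1) * h (x.1.2, x.2.2)
                ∂((μ.prod μ).prod (ν.prod ν)) := by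
          rw [← hlaw]
          exact (integral_map (hmeasU.prodMk hmeasV).aemeasurable
            hFm.stronglyMeasurable.aestronglyMeasurable).symm
        rw [key, MeasureTheory.integral_prod _ hFint]
        have inner : ∀ up : α × α,
            (∫ vp : β × β, h (up.1, vp.1) * h (up.2, vp.2) ∂(ν.prod ν)) = 0 := by
          intro up
          calc ∫ vp : β × β, h (up.1, vp.1) * h (up.2, vp.2) ∂(ν.prod ν)
              = (∫ v, h (up.1, v) ∂ν) * ∫ v, h (up.2, v) ∂ν :=
                integral_prod_mul (f := fun v => h (up.1, v)) (g := fun v => h (up.2, v))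
            _ = 0 := by rw [hdeg2 up.1, zero_mul]
        simp only [inner, integral_zero]
  -- the degenerate double sum
  set T : ℕ → Ω → ℝ := fun N ω =>
    ((N : ℝ) ^ 2)⁻¹ * ∑ j ∈ Finset.range N, ∑ k ∈ Finset.range N, h (U j ω, V k ω) with hTdef
  have hTmeas : ∀ N, Measurable (T N) := fun N =>
    measurable_const.mul <| Finset.measurable_sum _ fun j _ =>
      Finset.measurable_sum _ fun k _ => hhm.comp ((hUmeas j).prodMk (hVmeas k))
  have hTb : ∀ N ω, |T N ω| ≤ 3 * C := by
    intro N ω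
    rcases Nat.eq_zero_or_pos N with rfl | h0
    · simp [hTdef]; linarith
    · have h1 : |∑ j ∈ Finset.range N, ∑ k ∈ Finset.range N, h (U j ω, V k ω)|
          ≤ (N:ℝ)^2 * (3 * C) := by
        calc |∑ j ∈ Finset.range N, ∑ k ∈ Finset.range N, h (U j ω, V k ω)|
            ≤ ∑ j ∈ Finset.range N, |∑ k ∈ Finset.range N, h (U j ω, V k ω)| :=
              Finset.abs_sum_le_sum_abs _ _
          _ ≤ ∑ j ∈ Finset.range N, ∑ k ∈ Finset.range N, |h (U j ω, V k ω)| :=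
              Finset.sum_le_sum fun j _ => Finset.abs_sum_le_sum_abs _ _
          _ ≤ ∑ j ∈ Finset.range N, ∑ k ∈ Finset.range N, 3 * C :=
              Finset.sum_le_sum fun j _ => Finset.sum_le_sum fun k _ => hhb _
          _ = (N:ℝ)^2 * (3 * C) := by
              simp [Finset.sum_const, Finset.card_range]; ring
      calc |T N ω|
          = ((N:ℝ)^2)⁻¹ * |∑ j ∈ Finset.range N, ∑ k ∈ Finset.range N, h (U j ω, V k ω)| := by
            rw [hTdef]
            dsimp only
            rw [abs_mul, abs_of_nonneg (by positivity : (0:ℝ) ≤ ((N:ℝ)^2)⁻¹)]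
        _ ≤ ((N:ℝ)^2)⁻¹ * ((N:ℝ)^2 * (3 * C)) :=
            mul_le_mul_of_nonneg_left h1 (by positivity)
        _ = 3 * C := by
            have hN : ((N:ℝ)^2) ≠ 0 := by positivity
            field_simp
  have hTbound : ∀ N : ℕ, ∫ ω, (T N ω)^2 ∂P ≤ 9 * C^2 * (1 / (N:ℝ)^2) := by
    intro N
    set s : Finset (ℕ × ℕ) := Finset.range N ×ˢ Finset.range N with hsdef
    have hprod : ∀ ω : Ω, ∑ j ∈ Finset.range N, ∑ k ∈ Finset.range N, h (U j ω, V k ω)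
        = ∑ p ∈ s, a p ω := fun ω => (Finset.sum_product (s := Finset.range N)
          (t := Finset.range N) (f := fun p => a p ω)).symm
    have hexp : ∀ ω : Ω, (T N ω)^2 = (((N:ℝ)^2)⁻¹)^2 * ∑ p ∈ s, ∑ q ∈ s, a p ω * a q ω := by
      intro ω
      rw [hTdef]
      dsimp only
      rw [hprod ω, mul_pow, pow_two (∑ p ∈ s, a p ω), Finset.sum_mul_sum]
    have hIsum : ∫ ω, (T N ω)^2 ∂P
        = (((N:ℝ)^2)⁻¹)^2 * ∑ p ∈ s, ∑ q ∈ s, ∫ ω, a p ω * a q ω ∂P := by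
      simp_rw [hexp]
      rw [integral_const_mul]
      congr 1
      rw [integral_finset_sum _ fun p _ => integrable_finset_sum _ fun q _ => hintpq p q]
      exact Finset.sum_congr rfl fun p _ => integral_finset_sum _ fun q _ => hintpq p q
    have hdiag : ∀ p ∈ s, ∑ q ∈ s, ∫ ω, a p ω * a q ω ∂P = ∫ ω, a p ω * a p ω ∂P :=
      fun p hp => Finset.sum_eq_single_of_mem p hp fun q _ hqp => hortho p q hqp.symm
    have hsqb : ∀ p : ℕ × ℕ, ∫ ω, a p ω * a p ω ∂P ≤ 9 * C^2 := by
      intro p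
      have hpt : ∀ ω, a p ω * a p ω ≤ 9 * C^2 := fun ω => by
        nlinarith [hab p ω, abs_nonneg (a p ω), neg_abs_le (a p ω), le_abs_self (a p ω)]
      calc ∫ ω, a p ω * a p ω ∂P ≤ ∫ _ω, 9 * C^2 ∂P :=
            integral_mono (hintpq p p) (integrable_const _) hpt
        _ = 9 * C^2 := by simp
    have hcard : (s.card : ℝ) = (N:ℝ)^2 := by
      rw [hsdef, Finset.card_product, Finset.card_range]
      push_cast; ring
    have hfinal : ∑ p ∈ s, ∑ q ∈ s, ∫ ω, a p ω * a q ω ∂P ≤ (N:ℝ)^2 * (9 * C^2) := by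
      calc ∑ p ∈ s, ∑ q ∈ s, ∫ ω, a p ω * a q ω ∂P
          = ∑ p ∈ s, ∫ ω, a p ω * a p ω ∂P := Finset.sum_congr rfl hdiag
        _ ≤ ∑ p ∈ s, 9 * C^2 := Finset.sum_le_sum fun p _ => hsqb p
        _ = (s.card : ℝ) * (9 * C^2) := by rw [Finset.sum_const, nsmul_eq_mul]
        _ = (N:ℝ)^2 * (9 * C^2) := by rw [hcard]
    rw [hIsum]
    rcases Nat.eq_zero_or_pos N with rfl | h0
    · simp [hsdef]
    · have hN : ((N:ℝ)^2) ≠ 0 := by positivity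
      calc (((N:ℝ)^2)⁻¹)^2 * ∑ p ∈ s, ∑ q ∈ s, ∫ ω, a p ω * a q ω ∂P
          ≤ (((N:ℝ)^2)⁻¹)^2 * ((N:ℝ)^2 * (9 * C^2)) :=
            mul_le_mul_of_nonneg_left hfinal (by positivity)
        _ = 9 * C^2 * (1 / (N:ℝ)^2) := by field_simp
  have hTsqint : ∀ N, Integrable (fun ω => (T N ω)^2) P := fun N =>
    integrable_of_abs_le' ((hTmeas N).pow_const 2).aestronglyMeasurable
      (D := (3*C)*(3*C)) (fun ω => by
        rw [abs_of_nonneg (sq_nonneg _)]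
        nlinarith [hTb N ω, abs_nonneg (T N ω), neg_abs_le (T N ω), le_abs_self (T N ω)])
  have hlint : ∀ N, ∫⁻ ω, (‖T N ω‖₊ : ENNReal)^2 ∂P = ENNReal.ofReal (∫ ω, (T N ω)^2 ∂P) := by
    intro N
    rw [MeasureTheory.ofReal_integral_eq_lintegral_ofReal (hTsqint N)
      (ae_of_all _ fun ω => sq_nonneg _)]
    refine lintegral_congr fun ω => ?_
    rw [← enorm_eq_nnnorm, ← ofReal_norm, ← ENNReal.ofReal_pow (norm_nonneg _),
      Real.norm_eq_abs, sq_abs]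
  have hsummable : Summable (fun N : ℕ => 9 * C^2 * (1/(N:ℝ)^2)) :=
    (Real.summable_one_div_nat_pow.mpr one_lt_two).mul_left _
  have hsum : ∑' N, ∫⁻ ω, (‖T N ω‖₊ : ENNReal)^2 ∂P ≠ ⊤ := by
    have hb : ∀ N, ∫⁻ ω, (‖T N ω‖₊ : ENNReal)^2 ∂P ≤ ENNReal.ofReal (9 * C^2 * (1/(N:ℝ)^2)) :=
      fun N => by rw [hlint N]; exact ENNReal.ofReal_le_ofReal (hTbound N)
    refine ne_top_of_le_ne_top ?_ (ENNReal.tsum_le_tsum hb)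
    rw [← ENNReal.ofReal_tsum_of_nonneg (fun N => by positivity) hsummable]
    exact ENNReal.ofReal_ne_top
  have hTae := ae_tendsto_zero_of_summable_sq' P T hTmeas hsum
  -- combine the three parts
  filter_upwards [hA, hB, hTae] with ω hAω hBω hTω
  have hGsplit : ∀ u v, G (u, v) = h (u, v) + g1 u + g2 v := fun u v => by
    simp only [hhdef]; ring
  have hdecomp : ∀ N : ℕ, ((N:ℝ)^2)⁻¹ *
      ∑ j ∈ Finset.range N, ∑ k ∈ Finset.range N, G (U j ω, V k ω)
      = T N ω + (N:ℝ)⁻¹ • (∑ j ∈ Finset.range N, g1 (U j ω))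
        + (N:ℝ)⁻¹ • (∑ k ∈ Finset.range N, g2 (V k ω)) := by
    intro N
    have e1 : ∑ j ∈ Finset.range N, ∑ k ∈ Finset.range N, G (U j ω, V k ω)
        = (∑ j ∈ Finset.range N, ∑ k ∈ Finset.range N, h (U j ω, V k ω))
          + (N:ℝ) * (∑ j ∈ Finset.range N, g1 (U j ω))
          + (N:ℝ) * (∑ k ∈ Finset.range N, g2 (V k ω)) := by
      simp_rw [hGsplit, Finset.sum_add_distrib, Finset.sum_const, Finset.card_range,
        nsmul_eq_mul, ← Finset.mul_sum]
    rcases Nat.eq_zero_or_pos N with rfl | h0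
    · simp [hTdef]
    · have hN : ((N:ℝ)) ≠ 0 := Nat.cast_ne_zero.mpr h0.ne'
      rw [e1, hTdef]
      dsimp only
      rw [smul_eq_mul, smul_eq_mul]
      field_simp
  have hfin := (hTω.add hAω).add hBω
  rw [add_zero, add_zero] at hfin
  exact Tendsto.congr (fun N => (hdecomp N).symm) hfin
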